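/- The function $F(x,y) = |x| \sinh^{-1}(y/x) + |y| \sinh^{-1}(x/y)$ satisfies $\frac{\partial^2 F}{\partial x \partial y}(x,y) = \frac{1}{\sqrt{x^2 + y^2}}$ for all $x \ne 0$, $y \ne 0$. -/

import Mathlib

lemma sqrt_one_add_div_sq (a b : ℝ) (hb : b ≠ 0) :
    Real.sqrt (1 + (a / b) ^ 2) = Real.sqrt (b ^ 2 + a ^ 2) / |b| := by
  have h : 1 + (a / b) ^ 2 = (b ^ 2 + a ^ 2) / b ^ 2 := by field_simp
  rw [h, Real.sqrt_div (by positivity), Real.sqrt_sq_eq_abs]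

lemma abs_div_self_eq_sign (y : ℝ) (hy : y ≠ 0) : |y| / y = (SignType.sign y : ℝ) := by
  rcases hy.lt_or_gt with h | h
  · rw [abs_of_neg h, sign_neg h]; push_cast; field_simp; simp
  · rw [abs_of_pos h, sign_pos h]; push_cast; field_simp; simp

lemma inner_deriv (y : ℝ) (hy : y ≠ 0) (x' : ℝ) :
    deriv (fun y' : ℝ => |x'| * Real.arsinh (y' / x') + |y'| * Real.arsinh (x' / y')) y
      = (|y| / y) * Real.arsinh (x' / y) := by
  rcases eq_or_ne x' 0 with rfl | hx'
  · have h0 : (fun y' : ℝ => |(0:ℝ)| * Real.arsinh (y' / 0) + |y'| * Real.arsinh (0 / y'))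
        = fun _ => (0:ℝ) := by funext y'; simp
    rw [h0, deriv_const]; simp
  · have h1 : HasDerivAt (fun y' : ℝ => |x'| * Real.arsinh (y' / x'))
        (|x'| * ((Real.sqrt (1 + (y / x') ^ 2))⁻¹ * (1 / x'))) y :=
      (((Real.hasDerivAt_arsinh (y / x')).comp y
        ((hasDerivAt_id y).div_const x'))).const_mul _
    have habs : HasDerivAt (fun y' : ℝ => |y'|) (|y| / y) y := by
      rw [abs_div_self_eq_sign y hy]; exact hasDerivAt_abs hy
    have hd : HasDerivAt (fun y' : ℝ => x' / y') (-x' / y ^ 2) y := by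
      have h := (hasDerivAt_inv hy).const_mul x'
      have he : (fun y' : ℝ => x' * y'⁻¹) = fun y' : ℝ => x' / y' := by
        funext y'; rw [div_eq_mul_inv]
      rw [he] at h
      rw [show -x' / y ^ 2 = x' * -(y ^ 2)⁻¹ by ring]
      exact h
    have h2 : HasDerivAt (fun y' : ℝ => Real.arsinh (x' / y'))
        ((Real.sqrt (1 + (x' / y) ^ 2))⁻¹ * (-x' / y ^ 2)) y :=
      (Real.hasDerivAt_arsinh _).comp y hd
    have hsum : HasDerivAt (fun y' : ℝ => |x'| * Real.arsinh (y' / x') + |y'| * Real.arsinh (x' / y')) _ y :=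
      h1.add (habs.mul h2)
    rw [hsum.deriv]
    rw [sqrt_one_add_div_sq y x' hx', sqrt_one_add_div_sq x' y hy, add_comm (y ^ 2)]
    set s := Real.sqrt (x' ^ 2 + y ^ 2) with hs
    have hspos : 0 < s := Real.sqrt_pos.2 (by positivity)
    have hs2 : s ^ 2 = x' ^ 2 + y ^ 2 := Real.sq_sqrt (by positivity)
    have hax : |x'| ≠ 0 := abs_ne_zero.2 hx'
    have hay : |y| ≠ 0 := abs_ne_zero.2 hy
    have hA : |x'| * ((s / |x'|)⁻¹ * (1 / x')) = x' / s := by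
      rw [inv_div]; field_simp; nlinarith [sq_abs x']
    have hB : |y| * ((s / |y|)⁻¹ * (-x' / y ^ 2)) = -(x' / s) := by
      rw [inv_div]; field_simp; rw [← sq_abs y]
    rw [hA, hB]; ring

theorem mixed_partial_kernel_antideriv (x y : ℝ) (hx : x ≠ 0) (hy : y ≠ 0) :
    deriv (fun x' : ℝ =>
        deriv (fun y' : ℝ => |x'| * Real.arsinh (y' / x') + |y'| * Real.arsinh (x' / y')) y) x
      = 1 / Real.sqrt (x ^ 2 + y ^ 2) := by
  have hfun : (fun x' : ℝ =>
      deriv (fun y' : ℝ => |x'| * Real.arsinh (y' / x') + |y'| * Real.arsinh (x' / y')) y)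
      = fun x' : ℝ => (|y| / y) * Real.arsinh (x' / y) := funext (inner_deriv y hy)
  rw [hfun]
  have H : HasDerivAt (fun x' : ℝ => (|y| / y) * Real.arsinh (x' / y))
      ((|y| / y) * ((Real.sqrt (1 + (x / y) ^ 2))⁻¹ * (1 / y))) x :=
    (((Real.hasDerivAt_arsinh (x / y)).comp x ((hasDerivAt_id x).div_const y))).const_mul _
  rw [H.deriv, sqrt_one_add_div_sq x y hy, add_comm (y ^ 2)]
  set s := Real.sqrt (x ^ 2 + y ^ 2) with hs
  have hspos : 0 < s := Real.sqrt_pos.2 (by positivity)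
  have hay : |y| ≠ 0 := abs_ne_zero.2 hy
  rw [inv_div]; field_simp; ring
  exact sq_abs y
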